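/- Suppose f, g, h₁, h₂ : S → F satisfy f(x·σ(y)) = f(x)h₁(y) + g(x)h₂(y) for all x, y ∈ S, with {f, g} and {h₁, h₂} each linearly independent. Then the span of {Jf, Jg} is invariant under L(y) for every y ∈ S, where (Jh)(x) = h(σ(x)) and (L(y)h)(x) = h(yx). -/
import Mathlib


theorem span_Jf_Jg_L_invariant {S F : Type*} [Semigroup S] [Field F]
    (hchar : (2 : F) ≠ 0)
    (σ : S → S) (hsurj : Function.Surjective σ)
    (hanti : ∀ x y : S, σ (x * y) = σ y * σ x)
    (hinv : ∀ x : S, σ (σ x) = x)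
    (f g h₁ h₂ : S → F)
    (heq : ∀ x y : S, f (x * σ y) = f x * h₁ y + g x * h₂ y)
    (hfg : LinearIndependent F ![f, g])
    (hh : LinearIndependent F ![h₁, h₂])
    (J : (S → F) → (S → F)) (hJ : ∀ h x, J h x = h (σ x))
    (L : S → (S → F) → (S → F)) (hL : ∀ y h x, L y h x = h (y * x)) :
    ∀ y : S, ∀ p ∈ Submodule.span F {J f, J g}, L y p ∈ Submodule.span F {J f, J g} := by
  -- h₂ is not identically zero
  have hh2 : h₂ ≠ 0 := by
    have := hh.ne_zero 1
    simpa using this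
  obtain ⟨y₀, hy₀⟩ : ∃ y₀, h₂ y₀ ≠ 0 := by
    by_contra hc
    push_neg at hc
    exact hh2 (funext hc)
  -- equation for g
  have hgeq : ∀ x z : S, g (x * σ z) =
      f x * ((h₁ (y₀ * z) - h₁ z * h₁ y₀) / h₂ y₀) +
      g x * ((h₂ (y₀ * z) - h₂ z * h₁ y₀) / h₂ y₀) := by
    intro x z
    have e1 : f (x * σ (y₀ * z)) = f x * h₁ (y₀ * z) + g x * h₂ (y₀ * z) := heq x (y₀ * z)
    have e2 : x * σ (y₀ * z) = (x * σ z) * σ y₀ := by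
      rw [hanti, mul_assoc]
    rw [e2, heq (x * σ z) y₀, heq x z] at e1
    field_simp
    linear_combination e1
  intro y p hp
  have key1 : L y (J f) ∈ Submodule.span F {J f, J g} := by
    rw [Submodule.mem_span_pair]
    refine ⟨h₁ y, h₂ y, ?_⟩
    funext x
    have : f (σ x * σ y) = f (σ x) * h₁ y + g (σ x) * h₂ y := heq (σ x) y
    simp only [Pi.add_apply, Pi.smul_apply, smul_eq_mul, hL, hJ, hanti]
    rw [this]; ring
  have key2 : L y (J g) ∈ Submodule.span F {J f, J g} := by
    rw [Submodule.mem_span_pair]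
    refine ⟨(h₁ (y₀ * y) - h₁ y * h₁ y₀) / h₂ y₀, (h₂ (y₀ * y) - h₂ y * h₁ y₀) / h₂ y₀, ?_⟩
    funext x
    have := hgeq (σ x) y
    simp only [Pi.add_apply, Pi.smul_apply, smul_eq_mul, hL, hJ, hanti]
    rw [this]; ring
  induction hp using Submodule.span_induction with
  | mem q hq =>
      rcases hq with h | h
      · subst h; exact key1
      · simp only [Set.mem_singleton_iff] at h; subst h; exact key2
  | zero =>
      have : L y 0 = 0 := by funext x; simp [hL]
      rw [this]; exact Submodule.zero_mem _
  | add a b _ _ ha hb =>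
      have : L y (a + b) = L y a + L y b := by funext x; simp [hL]
      rw [this]; exact Submodule.add_mem _ ha hb
  | smul c a _ ha =>
      have : L y (c • a) = c • L y a := by funext x; simp [hL]
      rw [this]; exact Submodule.smul_mem _ _ ha
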